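/- If N is a positive integer not divisible by 7 and not divisible by 9, then every integer n can be written as n ≡ u³ + v³ (mod N) for some integers u, v. -/

import Mathlib

open Finset

section charlemmas
variable {p : ℕ} [Fact p.Prime]

lemma chi_cube_roots {χ : MulChar (ZMod p) ℂ} (hord : orderOf χ = 3)
    {x : ZMod p} (hx : x ≠ 0) : (χ x) ^ 3 = 1 := by
  have h3 : χ ^ 3 = 1 := by rw [← hord]; exact pow_orderOf_eq_one χ
  rw [← MulChar.pow_apply' χ (by norm_num) x, h3, MulChar.one_apply (isUnit_iff_ne_zero.mpr hx)]

lemma chi_ne_zero {χ : MulChar (ZMod p) ℂ} {x : ZMod p} (hx : x ≠ 0) : χ x ≠ 0 := by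
  have h : χ x * χ x⁻¹ = 1 := by
    rw [← map_mul, mul_inv_cancel₀ hx, map_one]
  exact left_ne_zero_of_mul_eq_one h

lemma chi_inv {χ : MulChar (ZMod p) ℂ} {x : ZMod p} (hx : x ≠ 0) : χ x⁻¹ = (χ x)⁻¹ := by
  have h : χ x * χ x⁻¹ = 1 := by
    rw [← map_mul, mul_inv_cancel₀ hx, map_one]
  exact eq_inv_of_mul_eq_one_left (by linear_combination h)

lemma cube_of_chi_eq_one {χ : MulChar (ZMod p) ℂ} (hord : orderOf χ = 3)
    {x : ZMod p} (hx : x ≠ 0) (h1 : χ x = 1) : ∃ y : ZMod p, y ≠ 0 ∧ y ^ 3 = x := by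
  obtain ⟨g, hg⟩ := IsCyclic.exists_generator (α := (ZMod p)ˣ)
  have hxu : IsUnit x := isUnit_iff_ne_zero.mpr hx
  have hx' : hxu.unit ∈ Submonoid.powers g := by
    rw [mem_powers_iff_mem_zpowers]; exact hg hxu.unit
  obtain ⟨k, hk⟩ := hx'
  simp only [] at hk
  have hg3 : (χ g) ^ 3 = 1 := chi_cube_roots hord (Units.ne_zero g)
  have hgne : χ g ≠ 1 := by
    intro h
    have : χ = 1 := by
      rw [MulChar.eq_one_iff]
      intro a
      obtain ⟨m, hm⟩ := (mem_powers_iff_mem_zpowers).mpr (hg a)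
      simp only [] at hm
      rw [← hm, Units.val_pow_eq_pow_val, map_pow, h, one_pow]
    rw [this, orderOf_one] at hord; norm_num at hord
  have : Fact (Nat.Prime 3) := ⟨by norm_num⟩
  have hordg : orderOf (χ g) = 3 := orderOf_eq_prime hg3 hgne
  have hxval : χ x = (χ g) ^ k := by
    conv_lhs => rw [← hxu.unit_spec, ← hk]
    rw [Units.val_pow_eq_pow_val, map_pow]
  have h3k : 3 ∣ k := by
    rw [← hordg]
    exact orderOf_dvd_of_pow_eq_one (by rw [← hxval, h1])
  obtain ⟨m, rfl⟩ := h3k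
  refine ⟨(g ^ m : (ZMod p)ˣ), Units.ne_zero _, ?_⟩
  rw [← Units.val_pow_eq_pow_val, ← pow_mul, ← hxu.unit_spec, ← hk]
  norm_num [mul_comm]

end charlemmas

lemma roots3 {K : Type*} [Field K] {ν t : K} (hν : ν ^ 3 = 1) (hν1 : ν ≠ 1)
    (ht : t ^ 3 = 1) : t = 1 ∨ t = ν ∨ t = ν ^ 2 := by
  have hsum : ν ^ 2 + ν + 1 = 0 := by
    have h := sub_ne_zero.mpr hν1
    have : (ν - 1) * (ν ^ 2 + ν + 1) = 0 := by linear_combination hν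
    rcases mul_eq_zero.mp this with h' | h'
    · exact absurd h' h
    · exact h'
  have hz : (t - 1) * (t - ν) * (t - ν ^ 2) = 0 := by
    linear_combination ht + (t - t ^ 2) * hsum + (t - 1) * hν
  rcases mul_eq_zero.mp hz with h | h
  · rcases mul_eq_zero.mp h with h | h
    · exact Or.inl (sub_eq_zero.mp h)
    · exact Or.inr (Or.inl (sub_eq_zero.mp h))
  · exact Or.inr (Or.inr (sub_eq_zero.mp h))

lemma sum_two_cubes_of_prime (p : ℕ) [Fact p.Prime] (h3 : 3 ∣ p - 1) (h7 : p ≠ 7) :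
    ∀ n : ZMod p, ∃ u v : ZMod p, u ^ 3 + v ^ 3 = n := by
  have hp : p.Prime := Fact.out
  have hp13 : 13 ≤ p := by
    by_contra hlt
    push_neg at hlt
    have h2 := hp.two_le
    interval_cases p <;> first | (exact h7 rfl) | omega | (revert hp; norm_num)
  intro n
  by_contra hcon
  push_neg at hcon
  have hn0 : n ≠ 0 := by
    intro h; exact hcon 1 (-1) (by rw [h]; ring)
  have h3' : 3 ∣ Fintype.card (ZMod p) - 1 := by rwa [ZMod.card]
  obtain ⟨χ, hord⟩ := MulChar.exists_mulChar_orderOf (ZMod p) h3'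
      (Complex.isPrimitiveRoot_exp 3 (by norm_num))
  set ν := χ n with hνdef
  have hν3 : ν ^ 3 = 1 := chi_cube_roots hord hn0
  have hνne : ν ≠ 0 := chi_ne_zero hn0
  have hν1 : ν ≠ 1 := by
    intro h
    obtain ⟨y, hy0, hy⟩ := cube_of_chi_eq_one hord hn0 h
    exact hcon y 0 (by rw [hy]; ring)
  have hsum : ν ^ 2 + ν + 1 = 0 := by
    have h := sub_ne_zero.mpr hν1
    have hz : (ν - 1) * (ν ^ 2 + ν + 1) = 0 := by linear_combination hν3
    rcases mul_eq_zero.mp hz with h' | h'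
    · exact absurd h' h
    · exact h'
  -- Claim A
  have claimA : ∀ s : ZMod p, s ≠ 0 → (∃ u v : ZMod p, u ^ 3 + v ^ 3 = s) → χ s ≠ ν := by
    rintro s hs ⟨u, v, huv⟩ hχs
    have hd0 : n * s⁻¹ ≠ 0 := mul_ne_zero hn0 (inv_ne_zero hs)
    have h1 : χ (n * s⁻¹) = 1 := by
      rw [map_mul, chi_inv hs, hχs, ← hνdef, mul_inv_cancel₀ hνne]
    obtain ⟨c, hc0, hc⟩ := cube_of_chi_eq_one hord hd0 h1
    apply hcon (c * u) (c * v)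
    have hn' : n = c ^ 3 * s := by
      rw [hc]; field_simp
    rw [hn', ← huv]; ring
  -- Claim B
  have claimB : ∀ x : ZMod p, x ≠ 0 → 1 - x ≠ 0 → χ x * χ (1 - x) ≠ ν := by
    intro x hx hx1 hab
    have ha3 : (χ x) ^ 3 = 1 := chi_cube_roots hord hx
    have hb3 : (χ (1 - x)) ^ 3 = 1 := chi_cube_roots hord hx1
    by_cases hA : χ x = 1
    · obtain ⟨c, hc0, hc⟩ := cube_of_chi_eq_one hord hx hA
      refine claimA (1 - x) hx1 ⟨1, -c, by rw [← hc]; ring⟩ ?_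
      rwa [hA, one_mul] at hab
    by_cases hB : χ (1 - x) = 1
    · obtain ⟨c, hc0, hc⟩ := cube_of_chi_eq_one hord hx1 hB
      refine claimA x hx ⟨1, -c, by linear_combination -hc⟩ ?_
      rwa [hB, mul_one] at hab
    by_cases hE : χ x = χ (1 - x)
    · -- x⁻¹ = 1 + c^3 case
      have hq0 : (1 - x) * x⁻¹ ≠ 0 := mul_ne_zero hx1 (inv_ne_zero hx)
      have hq1 : χ ((1 - x) * x⁻¹) = 1 := by
        rw [map_mul, chi_inv hx, ← hE, mul_inv_cancel₀ (chi_ne_zero hx)]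
      obtain ⟨c, hc0, hc⟩ := cube_of_chi_eq_one hord hq0 hq1
      refine claimA x⁻¹ (inv_ne_zero hx) ⟨1, c, ?_⟩ ?_
      · rw [hc]; field_simp; ring
      · rw [chi_inv hx]
        refine inv_eq_of_mul_eq_one_right ?_
        rw [← hab, ← hE]; linear_combination ha3
    · rcases roots3 ha3 hA hb3 with h | h | h
      · exact hB h
      · exact hE h.symm
      · apply hν1
        rw [← hab, h]; linear_combination ha3
  -- counting
  classical
  set f : ZMod p → ℂ := fun x => χ x * χ (1 - x) with hf
  have hf0 : f 0 = 0 := by simp [hf, MulChar.map_zero]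
  have hf1 : f 1 = 0 := by simp [hf, MulChar.map_zero]
  have hν2ne1 : ν ^ 2 ≠ 1 := by
    intro h
    apply hν1
    have hn : ν * ν ^ 2 = 1 := by linear_combination hν3
    rwa [h, mul_one] at hn
  have hval : ∀ x : ZMod p, x ≠ 0 → x ≠ 1 → f x = 1 ∨ f x = ν ^ 2 := by
    intro x hx0 hx1
    have h1x : 1 - x ≠ 0 := sub_ne_zero.mpr (Ne.symm hx1)
    have hfx3 : (f x) ^ 3 = 1 := by
      rw [hf]
      simp only []
      rw [mul_pow, chi_cube_roots hord hx0, chi_cube_roots hord h1x, one_mul]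
    rcases roots3 hν3 hν1 hfx3 with h | h | h
    · exact Or.inl h
    · exact absurd h (claimB x hx0 h1x)
    · exact Or.inr h
  set S1 : Finset (ZMod p) := Finset.univ.filter (fun x => f x = 1) with hS1
  set S2 : Finset (ZMod p) := Finset.univ.filter (fun x => f x = ν ^ 2) with hS2
  have h01 : (0 : ZMod p) ≠ 1 := by
    intro h; exact one_ne_zero (α := ZMod p) h.symm
  have hunion : S1 ∪ S2 = Finset.univ \ {0, 1} := by
    ext x
    simp only [hS1, hS2, Finset.mem_union, Finset.mem_filter, Finset.mem_univ, true_and,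
      Finset.mem_sdiff, Finset.mem_insert, Finset.mem_singleton]
    constructor
    · rintro (h | h) (rfl | rfl)
      · rw [hf0] at h; exact one_ne_zero h.symm
      · rw [hf1] at h; exact one_ne_zero h.symm
      · rw [hf0] at h; exact (pow_ne_zero 2 hνne) h.symm
      · rw [hf1] at h; exact (pow_ne_zero 2 hνne) h.symm
    · intro hx
      exact hval x (fun h0 => hx (Or.inl h0)) (fun h1 => hx (Or.inr h1))
  have hdisj : Disjoint S1 S2 := by
    rw [Finset.disjoint_left]
    intro x hx1 hx2
    simp only [hS1, Finset.mem_filter] at hx1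
    simp only [hS2, Finset.mem_filter] at hx2
    exact hν2ne1 (by rw [← hx2.2, hx1.2])
  have hcardU : (Finset.univ \ ({0, 1} : Finset (ZMod p))).card = p - 2 := by
    rw [Finset.card_sdiff_of_subset (Finset.subset_univ _), Finset.card_univ, ZMod.card]
    congr 1
    rw [Finset.card_insert_of_notMem (by simp [h01]), Finset.card_singleton]
  have hAB : S1.card + S2.card = p - 2 := by
    rw [← Finset.card_union_of_disjoint hdisj, hunion, hcardU]
  have hsplit : ∀ g : ZMod p → ℂ, g 0 = 0 → g 1 = 0 →
      ∑ x : ZMod p, g x = ∑ x ∈ S1 ∪ S2, g x := by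
    intro g hg0 hg1
    have h := Finset.sum_sdiff (f := g) (Finset.subset_univ ({0, 1} : Finset (ZMod p)))
    rw [← h, Finset.sum_pair h01, hg0, hg1, hunion]
    ring
  have e1 : ∀ x ∈ S1, f x = 1 := by
    intro x hx
    simp only [hS1, Finset.mem_filter] at hx
    exact hx.2
  have e2 : ∀ x ∈ S2, f x = ν ^ 2 := by
    intro x hx
    simp only [hS2, Finset.mem_filter] at hx
    exact hx.2
  have hinv2 : (ν ^ 2)⁻¹ = ν := inv_eq_of_mul_eq_one_right (by linear_combination hν3)
  have hJ1 : jacobiSum χ χ = (S1.card : ℂ) + (S2.card : ℂ) * ν ^ 2 := by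
    have hJdef : jacobiSum χ χ = ∑ x : ZMod p, f x := rfl
    rw [hJdef, hsplit f hf0 hf1, Finset.sum_union hdisj,
      Finset.sum_congr rfl e1, Finset.sum_congr rfl e2, Finset.sum_const, Finset.sum_const,
      nsmul_eq_mul, nsmul_eq_mul, mul_one]
  have hJ2 : jacobiSum χ⁻¹ χ⁻¹ = (S1.card : ℂ) + (S2.card : ℂ) * ν := by
    have hJdef : jacobiSum χ⁻¹ χ⁻¹ = ∑ x : ZMod p, (f x)⁻¹ := by
      apply Finset.sum_congr rfl
      intro x _
      rw [MulChar.inv_apply_eq_inv', MulChar.inv_apply_eq_inv']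
      rw [hf]
      simp only []
      rw [mul_inv]
    have hs1 : ∑ x ∈ S1, (f x)⁻¹ = (S1.card : ℂ) := by
      rw [Finset.sum_eq_card_nsmul (fun x hx => show (f x)⁻¹ = 1 by rw [e1 x hx, inv_one])]
      simp
    have hs2 : ∑ x ∈ S2, (f x)⁻¹ = (S2.card : ℂ) * ν := by
      rw [Finset.sum_eq_card_nsmul (fun x hx => show (f x)⁻¹ = ν by rw [e2 x hx, hinv2])]
      rw [nsmul_eq_mul]
    calc jacobiSum χ⁻¹ χ⁻¹ = ∑ x : ZMod p, (f x)⁻¹ := hJdef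
      _ = ∑ x ∈ S1 ∪ S2, (f x)⁻¹ :=
          hsplit _ (by rw [hf0]; exact inv_zero) (by rw [hf1]; exact inv_zero)
      _ = (S1.card : ℂ) + (S2.card : ℂ) * ν := by
          rw [Finset.sum_union hdisj, hs1, hs2]
  have hχne1 : χ ≠ 1 := by
    intro h; rw [h, orderOf_one] at hord; norm_num at hord
  have hχχ : χ * χ ≠ 1 := by
    intro h
    have h2 : χ ^ 2 = 1 := by rw [pow_two]; exact h
    have hd := orderOf_dvd_of_pow_eq_one h2
    rw [hord] at hd; norm_num at hd
  have hrc : ringChar ℂ ≠ ringChar (ZMod p) := by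
    rw [ringChar.eq_zero, ZMod.ringChar_zmod_n]
    exact hp.pos.ne
  have hJJ := jacobiSum_mul_jacobiSum_inv hrc hχne1 hχne1 hχχ
  rw [hJ1, hJ2, ZMod.card] at hJJ
  have key : ((S1.card : ℂ)) ^ 2 + (S2.card : ℂ) ^ 2 - (S1.card : ℂ) * (S2.card : ℂ)
      = (p : ℂ) := by
    linear_combination hJJ - ((S1.card : ℂ) * (S2.card : ℂ)) * hsum
      - ((S2.card : ℂ) ^ 2) * hν3
  have keyN : S1.card ^ 2 + S2.card ^ 2 = S1.card * S2.card + p := by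
    have hc : ((S1.card ^ 2 + S2.card ^ 2 : ℕ) : ℂ) = ((S1.card * S2.card + p : ℕ) : ℂ) := by
      push_cast
      linear_combination key
    exact_mod_cast hc
  have hZ1 : (S1.card : ℤ) ^ 2 + (S2.card : ℤ) ^ 2
      = (S1.card : ℤ) * (S2.card : ℤ) + (S1.card : ℤ) + (S2.card : ℤ) + 2 := by
    have hp' : (S1.card : ℤ) + (S2.card : ℤ) + 2 = (p : ℤ) := by
      have : S1.card + S2.card + 2 = p := by omega
      exact_mod_cast this
    have : (S1.card : ℤ) ^ 2 + (S2.card : ℤ) ^ 2 = (S1.card : ℤ) * (S2.card : ℤ) + (p : ℤ) := by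
      exact_mod_cast keyN
    linarith
  have hZ2 : (S1.card : ℤ) + (S2.card : ℤ) = (p : ℤ) - 2 := by
    have : S1.card + S2.card + 2 = p := by omega
    push_cast [← this]
    ring
  have hZ3 : (13 : ℤ) ≤ (p : ℤ) := by exact_mod_cast hp13
  nlinarith [sq_nonneg ((S1.card : ℤ) - (S2.card : ℤ)), Int.ofNat_nonneg S1.card,
    Int.ofNat_nonneg S2.card, hZ1, hZ2, hZ3]

section rest
variable {p : ℕ} [Fact p.Prime]

lemma cube_surj (h3 : ¬ 3 ∣ p - 1) (m : ZMod p) : ∃ w : ZMod p, w ^ 3 = m := by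
  by_cases hm : m = 0
  · exact ⟨0, by rw [hm]; ring⟩
  have hinj : Function.Injective (fun w : (ZMod p)ˣ => w ^ 3) := by
    intro a b hab
    simp only [] at hab
    have h1 : (a * b⁻¹) ^ 3 = 1 := by
      rw [mul_pow, hab, inv_pow, mul_inv_cancel]
    have ho3 : orderOf (a * b⁻¹) ∣ 3 := orderOf_dvd_of_pow_eq_one h1
    have hoc : orderOf (a * b⁻¹) ∣ p - 1 := by
      have hcard := orderOf_dvd_card (x := a * b⁻¹)
      rwa [ZMod.card_units] at hcard
    have hcop : Nat.Coprime 3 (p - 1) :=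
      (Nat.Prime.coprime_iff_not_dvd (by norm_num)).mpr h3
    have hdvd1 : orderOf (a * b⁻¹) ∣ 1 := by
      have := Nat.dvd_gcd ho3 hoc
      rwa [Nat.coprime_iff_gcd_eq_one.mp hcop] at this
    have h1' : a * b⁻¹ = 1 := by
      rw [← orderOf_eq_one_iff]
      exact Nat.eq_one_of_dvd_one hdvd1
    rwa [mul_inv_eq_one] at h1'
  obtain ⟨w, hw⟩ := (Finite.injective_iff_surjective.mp hinj)
      (isUnit_iff_ne_zero.mpr hm).unit
  refine ⟨w, ?_⟩
  have := congrArg (Units.val) hw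
  rw [IsUnit.unit_spec] at this
  rw [← this, Units.val_pow_eq_pow_val]

lemma base_case (hp3 : p ≠ 3) (hp7 : p ≠ 7) (m : ZMod p) :
    ∃ u v : ZMod p, u ^ 3 + v ^ 3 = m ∧ u ≠ 0 := by
  by_cases hm : m = 0
  · exact ⟨1, -1, by rw [hm]; ring, one_ne_zero⟩
  by_cases h3 : 3 ∣ p - 1
  · obtain ⟨u, v, huv⟩ := sum_two_cubes_of_prime p h3 hp7 m
    by_cases hu : u = 0
    · refine ⟨v, 0, ?_, ?_⟩
      · rw [← huv, hu]; ring
      · intro hv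
        rw [hu, hv] at huv
        apply hm
        rw [← huv]; ring
    · exact ⟨u, v, huv, hu⟩
  · obtain ⟨w, hw⟩ := cube_surj h3 m
    refine ⟨w, 0, by rw [← hw]; ring, ?_⟩
    intro hw0
    apply hm
    rw [← hw, hw0]; ring

lemma int_cast_val_eq (a : ZMod p) : ((a.val : ℤ) : ZMod p) = a := by
  push_cast
  simp [ZMod.natCast_val, ZMod.cast_id]

lemma hensel (hp3 : p ≠ 3) (hp7 : p ≠ 7) :
    ∀ k : ℕ, ∀ n : ℤ, ∃ u v : ℤ, (p : ℤ) ^ (k + 1) ∣ (u ^ 3 + v ^ 3 - n) ∧ ¬ (p : ℤ) ∣ u := by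
  intro k
  induction k with
  | zero =>
    intro n
    obtain ⟨u0, v0, huv, hu0⟩ := base_case hp3 hp7 ((n : ZMod p))
    refine ⟨(u0.val : ℤ), (v0.val : ℤ), ?_, ?_⟩
    · rw [pow_one, ← ZMod.intCast_zmod_eq_zero_iff_dvd]
      push_cast
      simp only [ZMod.natCast_val, ZMod.cast_id]
      rw [huv]
      ring
    · intro hdvd
      rw [← ZMod.intCast_zmod_eq_zero_iff_dvd, int_cast_val_eq] at hdvd
      exact hu0 hdvd
  | succ k ih =>
    intro n
    obtain ⟨u, v, ⟨m, hm⟩, hu⟩ := ih n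
    have hpu : ((u : ℤ) : ZMod p) ≠ 0 := by
      rw [Ne, ZMod.intCast_zmod_eq_zero_iff_dvd]
      exact hu
    have h3Z : (3 : ZMod p) ≠ 0 := by
      intro h
      have h' : ((3 : ℕ) : ZMod p) = 0 := by exact_mod_cast h
      rw [ZMod.natCast_eq_zero_iff] at h'
      exact hp3 ((Nat.prime_dvd_prime_iff_eq Fact.out (by norm_num)).mp h')
    have h3u : ((3 * u ^ 2 : ℤ) : ZMod p) ≠ 0 := by
      push_cast
      exact mul_ne_zero h3Z (pow_ne_zero 2 hpu)
    set τ : ZMod p := -(m : ZMod p) * (((3 * u ^ 2 : ℤ) : ZMod p))⁻¹ with hτ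
    set t : ℤ := (τ.val : ℤ) with ht
    have hdvdt : (p : ℤ) ∣ m + 3 * u ^ 2 * t := by
      rw [← ZMod.intCast_zmod_eq_zero_iff_dvd]
      rw [Int.cast_add, Int.cast_mul, ht, int_cast_val_eq, hτ]
      rw [show ((3 * u ^ 2 : ℤ) : ZMod p) * (-(m : ZMod p) * (((3 * u ^ 2 : ℤ) : ZMod p))⁻¹)
          = -(m : ZMod p) * (((3 * u ^ 2 : ℤ) : ZMod p) * (((3 * u ^ 2 : ℤ) : ZMod p))⁻¹)
          from by ring]
      rw [mul_inv_cancel₀ h3u]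
      ring
    obtain ⟨c, hc⟩ := hdvdt
    refine ⟨u + t * (p : ℤ) ^ (k + 1), v,
      ⟨c + (p : ℤ) ^ k * (3 * u * t ^ 2) + (p : ℤ) ^ (2 * k + 1) * t ^ 3, ?_⟩, ?_⟩
    · linear_combination hm + (p : ℤ) ^ (k + 1) * hc
    · intro hdvd
      apply hu
      have hpP : (p : ℤ) ∣ t * (p : ℤ) ^ (k + 1) :=
        Dvd.dvd.mul_left (dvd_pow_self _ (Nat.succ_ne_zero k)) t
      have := dvd_sub hdvd hpP
      simpa using this

end rest

lemma zmod3_cube : ∀ x : ZMod 3, x ^ 3 = x := by decide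

lemma prime_pow_case (p k : ℕ) (hp : p.Prime) (hk : 0 < k) (h7 : ¬ 7 ∣ p ^ k)
    (h9 : ¬ 9 ∣ p ^ k) (n : ℤ) : ∃ u v : ℤ, ((p ^ k : ℕ) : ℤ) ∣ u ^ 3 + v ^ 3 - n := by
  haveI : Fact p.Prime := ⟨hp⟩
  have hp7 : p ≠ 7 := by
    rintro rfl
    exact h7 (dvd_pow_self 7 hk.ne')
  by_cases hp3 : p = 3
  · have hk1 : k = 1 := by
      by_contra hk1
      apply h9
      subst hp3
      calc (9 : ℕ) = 3 ^ 2 := by norm_num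
        _ ∣ 3 ^ k := pow_dvd_pow 3 (by omega)
    subst hp3
    subst hk1
    refine ⟨n, 0, ?_⟩
    have hthis : ((n ^ 3 + 0 ^ 3 - n : ℤ) : ZMod 3) = 0 := by
      push_cast
      rw [zmod3_cube]
      ring
    have hd : ((3 : ℕ) : ℤ) ∣ n ^ 3 + 0 ^ 3 - n :=
      (ZMod.intCast_zmod_eq_zero_iff_dvd _ 3).mp hthis
    have h31 : ((3 ^ 1 : ℕ) : ℤ) = ((3 : ℕ) : ℤ) := by norm_num
    rw [h31]
    exact hd
  · obtain ⟨u, v, hdvd, -⟩ := hensel hp3 hp7 (k - 1) n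
    refine ⟨u, v, ?_⟩
    have hke : k - 1 + 1 = k := by omega
    rw [hke] at hdvd
    push_cast
    exact hdvd

lemma combine_coprime (a b : ℕ) (hab : Nat.Coprime a b)
    (ha : ∀ n : ℤ, ∃ u v : ℤ, (a : ℤ) ∣ u ^ 3 + v ^ 3 - n)
    (hb : ∀ n : ℤ, ∃ u v : ℤ, (b : ℤ) ∣ u ^ 3 + v ^ 3 - n) :
    ∀ n : ℤ, ∃ u v : ℤ, ((a * b : ℕ) : ℤ) ∣ u ^ 3 + v ^ 3 - n := by
  intro n
  obtain ⟨u₁, v₁, h₁⟩ := ha n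
  obtain ⟨u₂, v₂, h₂⟩ := hb n
  have hcop : IsCoprime (a : ℤ) (b : ℤ) := Int.isCoprime_iff_gcd_eq_one.mpr hab
  obtain ⟨x, y, hxy⟩ := id hcop
  -- x * a + y * b = 1
  set u : ℤ := u₁ * (y * b) + u₂ * (x * a) with hu
  set v : ℤ := v₁ * (y * b) + v₂ * (x * a) with hv
  have hua : (a : ℤ) ∣ u - u₁ := ⟨x * (u₂ - u₁), by linear_combination u₁ * hxy⟩
  have hva : (a : ℤ) ∣ v - v₁ := ⟨x * (v₂ - v₁), by linear_combination v₁ * hxy⟩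
  have hub : (b : ℤ) ∣ u - u₂ := ⟨y * (u₁ - u₂), by linear_combination u₂ * hxy⟩
  have hvb : (b : ℤ) ∣ v - v₂ := ⟨y * (v₁ - v₂), by linear_combination v₂ * hxy⟩
  refine ⟨u, v, ?_⟩
  push_cast
  apply hcop.mul_dvd
  · have e1 : u ≡ u₁ [ZMOD (a : ℤ)] := (Int.modEq_iff_dvd.mpr (by simpa using hua)).symm
    have e2 : v ≡ v₁ [ZMOD (a : ℤ)] := (Int.modEq_iff_dvd.mpr (by simpa using hva)).symm
    have e3 : u ^ 3 + v ^ 3 - n ≡ u₁ ^ 3 + v₁ ^ 3 - n [ZMOD (a : ℤ)] :=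
      ((e1.pow 3).add (e2.pow 3)).sub (Int.ModEq.refl n)
    have hXY : (a : ℤ) ∣ (u ^ 3 + v ^ 3 - n) - (u₁ ^ 3 + v₁ ^ 3 - n) := e3.symm.dvd
    simpa using dvd_add hXY h₁
  · have e1 : u ≡ u₂ [ZMOD (b : ℤ)] := (Int.modEq_iff_dvd.mpr (by simpa using hub)).symm
    have e2 : v ≡ v₂ [ZMOD (b : ℤ)] := (Int.modEq_iff_dvd.mpr (by simpa using hvb)).symm
    have e3 : u ^ 3 + v ^ 3 - n ≡ u₂ ^ 3 + v₂ ^ 3 - n [ZMOD (b : ℤ)] :=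
      ((e1.pow 3).add (e2.pow 3)).sub (Int.ModEq.refl n)
    have hXY : (b : ℤ) ∣ (u ^ 3 + v ^ 3 - n) - (u₂ ^ 3 + v₂ ^ 3 - n) := e3.symm.dvd
    simpa using dvd_add hXY h₂

theorem stmt_13 (N : ℕ) (hN : 0 < N) (h7 : ¬ 7 ∣ N) (h9 : ¬ 9 ∣ N) (n : ℤ) :
    ∃ u v : ℤ, n ≡ u ^ 3 + v ^ 3 [ZMOD N] := by
  suffices h : ∀ M : ℕ, ¬ 7 ∣ M → ¬ 9 ∣ M → 0 < M →
      ∀ m : ℤ, ∃ u v : ℤ, (M : ℤ) ∣ u ^ 3 + v ^ 3 - m by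
    obtain ⟨u, v, hd⟩ := h N h7 h9 hN n
    exact ⟨u, v, Int.modEq_iff_dvd.mpr hd⟩
  intro M
  induction M using Nat.recOnPosPrimePosCoprime with
  | prime_pow p k hp hk =>
    intro h7' h9' _ m
    exact prime_pow_case p k hp hk h7' h9' m
  | zero =>
    intro _ _ h0
    exact absurd h0 (lt_irrefl 0)
  | one =>
    intro _ _ _ m
    exact ⟨0, 0, by simp⟩
  | coprime a b ha1 hb1 hab iha ihb =>
    intro h7' h9' h0 m
    have hda : ∀ n : ℤ, ∃ u v : ℤ, (a : ℤ) ∣ u ^ 3 + v ^ 3 - n :=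
      iha (fun hd => h7' (hd.mul_right b)) (fun hd => h9' (hd.mul_right b))
        (by omega)
    have hdb : ∀ n : ℤ, ∃ u v : ℤ, (b : ℤ) ∣ u ^ 3 + v ^ 3 - n :=
      ihb (fun hd => h7' (hd.mul_left a)) (fun hd => h9' (hd.mul_left a))
        (by omega)
    exact combine_coprime a b hab hda hdb m
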